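/- Acyclicity of interfaces of ground states: if σ, σ' ∈ 𝒢(J) are ground states on a planar graph G with generic couplings J (no finite nonempty ±1-signed combination of couplings equals zero), then the interface σΔσ' contains no edge set of the form ∂S for a finite nonempty vertex set S with ∂S ≠ ∅; equivalently, the dual representation of σΔσ' contains no cycle. -/

import Mathlib

open scoped BigOperators

noncomputable def spin (b : Bool) : ℝ := if b then 1 else -1

noncomputable def boundaryEnergy {V : Type*} [DecidableEq V] (G : SimpleGraph V)
    [G.LocallyFinite] (J : V → V → ℝ) (σ : V → Bool) (A : Finset V) : ℝ :=
  ∑ x ∈ A, ∑ y ∈ (G.neighborFinset x).filter (fun y => y ∉ A),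
    J x y * spin (σ x) * spin (σ y)

def IsGroundState {V : Type*} [DecidableEq V] (G : SimpleGraph V) [G.LocallyFinite]
    (J : V → V → ℝ) (σ : V → Bool) : Prop :=
  ∀ A : Finset V, 0 ≤ boundaryEnergy G J σ A

lemma spin_mul_pm (a b : Bool) : spin a * spin b = 1 ∨ spin a * spin b = -1 := by
  cases a <;> cases b <;> simp [spin]

lemma boundaryEnergy_eq {V : Type*} [DecidableEq V] (G : SimpleGraph V)
    [G.LocallyFinite] (J : V → V → ℝ) (hJsymm : ∀ x y, J x y = J y x)
    (σ : V → Bool) (S : Finset V)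
    (B : Finset (V × V))
    (hB : ∀ p : V × V, p ∈ B ↔ p.1 ∈ S ∧ G.Adj p.1 p.2 ∧ p.2 ∉ S) :
    boundaryEnergy G J σ S =
      ∑ e ∈ B.image Sym2.mk.uncurry,
        Sym2.lift ⟨fun x y => spin (σ x) * spin (σ y), fun a b => by ring⟩ e *
        Sym2.lift ⟨J, fun a b => (hJsymm a b)⟩ e := by
  rw [Finset.sum_image]
  · -- ∑ p ∈ B, spin*spin*J = boundaryEnergy reversed
    have : ∑ p ∈ B, (spin (σ p.1) * spin (σ p.2)) * J p.1 p.2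
        = boundaryEnergy G J σ S := by
      rw [boundaryEnergy]
      rw [Finset.sum_sigma' S
          (fun x => (G.neighborFinset x).filter (fun y => y ∉ S))
          (fun x y => J x y * spin (σ x) * spin (σ y))]
      refine Finset.sum_nbij' (fun p => ⟨p.1, p.2⟩) (fun q => (q.1, q.2)) ?_ ?_ ?_ ?_ ?_
      · intro p hp
        rw [hB] at hp
        simp [Finset.mem_sigma, Finset.mem_filter, hp.1, hp.2.1, hp.2.2]
      · intro q hq
        simp only [Finset.mem_sigma, Finset.mem_filter, SimpleGraph.mem_neighborFinset] at hq
        rw [hB]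
        exact ⟨hq.1, hq.2.1, hq.2.2⟩
      · intro p _; rfl
      · intro q _; rfl
      · intro p _; ring
    rw [← this]
    refine Finset.sum_congr rfl ?_
    intro p _
    obtain ⟨x, y⟩ := p
    simp [Sym2.lift_mk]
  · intro p hp q hq hpq
    rw [Finset.mem_coe, hB] at hp hq
    change s(p.1, p.2) = s(q.1, q.2) at hpq
    rw [Sym2.mk_eq_mk_iff] at hpq
    rcases hpq with h | h
    · exact h
    · exfalso
      have : p.1 = q.2 := by
        have := congrArg Prod.fst h
        simpa using this
      exact hq.2.2 (this ▸ hp.1)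

/-- Acyclicity of interfaces of ground states: for generic couplings (no nonempty
finite `±1`-signed combination of couplings over distinct edges vanishes), the
interface `σ Δ σ'` of two ground states contains no nonempty edge boundary `∂S` of a
finite vertex set; equivalently, its dual representation contains no cycle. -/
theorem interface_acyclic {V : Type*} [DecidableEq V] (G : SimpleGraph V)
    [G.LocallyFinite] (J : V → V → ℝ) (hJsymm : ∀ x y, J x y = J y x)
    (hgen : ∀ T : Finset (Sym2 V), T.Nonempty → (↑T : Set (Sym2 V)) ⊆ G.edgeSet →
      ∀ ε : Sym2 V → ℝ, (∀ e ∈ T, ε e = 1 ∨ ε e = -1) →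
      ∑ e ∈ T, ε e * Sym2.lift ⟨J, fun a b => (hJsymm a b)⟩ e ≠ 0)
    (σ σ' : V → Bool) (hσ : IsGroundState G J σ) (hσ' : IsGroundState G J σ') :
    ∀ S : Finset V,
      (∃ x ∈ S, ∃ y, G.Adj x y ∧ y ∉ S) →
      ¬ (∀ x ∈ S, ∀ y, G.Adj x y → y ∉ S →
          spin (σ x) * spin (σ y) ≠ spin (σ' x) * spin (σ' y)) := by
  rintro S ⟨x0, hx0, y0, hadj0, hy0⟩ hint
  classical
  set B : Finset (V × V) :=
    S.biUnion (fun x => ((G.neighborFinset x).filter (fun y => y ∉ S)).image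
      (fun y => (x, y))) with hBdef
  have hB : ∀ p : V × V, p ∈ B ↔ p.1 ∈ S ∧ G.Adj p.1 p.2 ∧ p.2 ∉ S := by
    intro p
    simp only [hBdef, Finset.mem_biUnion, Finset.mem_image, Finset.mem_filter,
      SimpleGraph.mem_neighborFinset]
    constructor
    · rintro ⟨x, hx, y, ⟨hadj, hy⟩, rfl⟩
      exact ⟨hx, hadj, hy⟩
    · rintro ⟨h1, h2, h3⟩
      exact ⟨p.1, h1, p.2, ⟨h2, h3⟩, rfl⟩
  set T : Finset (Sym2 V) := B.image Sym2.mk.uncurry with hTdef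
  set ε : (V → Bool) → Sym2 V → ℝ := fun τ =>
    Sym2.lift ⟨fun x y => spin (τ x) * spin (τ y), fun a b => by ring⟩ with hεdef
  set Jl : Sym2 V → ℝ := Sym2.lift ⟨J, fun a b => (hJsymm a b)⟩ with hJldef
  have h1 : boundaryEnergy G J σ S = ∑ e ∈ T, ε σ e * Jl e :=
    boundaryEnergy_eq G J hJsymm σ S B hB
  have h2 : boundaryEnergy G J σ' S = ∑ e ∈ T, ε σ' e * Jl e :=
    boundaryEnergy_eq G J hJsymm σ' S B hB
  have hflip : ∀ e ∈ T, ε σ' e = - ε σ e := by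
    intro e he
    rw [hTdef, Finset.mem_image] at he
    obtain ⟨p, hp, rfl⟩ := he
    rw [hB] at hp
    have hne := hint p.1 hp.1 p.2 hp.2.1 hp.2.2
    have e1 := spin_mul_pm (σ p.1) (σ p.2)
    have e2 := spin_mul_pm (σ' p.1) (σ' p.2)
    obtain ⟨x, y⟩ := p
    simp only [hεdef, Function.uncurry_apply_pair, Sym2.lift_mk]
    simp only at e1 e2 hne
    rcases e1 with h | h <;> rcases e2 with h' | h' <;> rw [h, h'] <;>
      first | (exact absurd (h.trans h'.symm) hne) | norm_num
  have hsum' : ∑ e ∈ T, ε σ' e * Jl e = - ∑ e ∈ T, ε σ e * Jl e := by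
    rw [← Finset.sum_neg_distrib]
    refine Finset.sum_congr rfl fun e he => ?_
    rw [hflip e he]; ring
  have hg1 := hσ S
  have hg2 := hσ' S
  rw [h1] at hg1
  rw [h2, hsum'] at hg2
  have hzero : ∑ e ∈ T, ε σ e * Jl e = 0 := le_antisymm (by linarith) hg1
  have hTne : T.Nonempty := ⟨Sym2.mk.uncurry (x0, y0), Finset.mem_image_of_mem _ ((hB _).2 ⟨hx0, hadj0, hy0⟩)⟩
  have hTsub : (↑T : Set (Sym2 V)) ⊆ G.edgeSet := by
    intro e he
    rw [Finset.mem_coe, hTdef, Finset.mem_image] at he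
    obtain ⟨p, hp, rfl⟩ := he
    rw [hB] at hp
    exact hp.2.1
  have hpm : ∀ e ∈ T, ε σ e = 1 ∨ ε σ e = -1 := by
    intro e he
    rw [hTdef, Finset.mem_image] at he
    obtain ⟨p, _, rfl⟩ := he
    simpa [hεdef, Function.uncurry_def, Sym2.lift_mk] using spin_mul_pm (σ p.1) (σ p.2)
  exact hgen T hTne hTsub (ε σ) hpm hzero
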